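/- Let V be a finite-dimensional real inner product space, let ε⁰ ∈ V with ε⁰ ≠ 0, and let W̃ : V → ℝ be a continuous function with W̃(ε⁰) > 0. Let (cₙ) be a sequence of nonnegative real numbers with cₙ → 0, and for each n let Sₙ : V → V be a self-adjoint positive definite linear operator such that: (i) W̃(ε) ≤ ⟨ε, Sₙ⁻¹ε⟩ for every ε ∈ V; (ii) ⟨ε⁰, Sₙ⁻¹ε⁰⟩ ≤ W̃(ε⁰) + cₙ; (iii) ⟨s, Sₙs⟩ ≤ cₙ‖s‖² for every s ∈ V with ⟨s, ε⁰⟩ = 0. Then for every σ⁰ ∈ V with ⟨ε⁰, σ⁰⟩ = W̃(ε⁰), the sequence Sₙσ⁰ converges to ε⁰ in V. -/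

import Mathlib

open scoped RealInnerProductSpace

open Filter

section Aux

variable {V : Type*} [NormedAddCommGroup V] [InnerProductSpace ℝ V]

lemma cs_aux (T : V → V) (hlin : ∀ (t : ℝ) (u v : V), T (u + t • v) = T u + t • T v)
    (hsa : ∀ u v : V, ⟪T u, v⟫ = ⟪u, T v⟫)
    (hpsd : ∀ u : V, 0 ≤ ⟪u, T u⟫) (u v : V) :
    ⟪u, T v⟫ ^ 2 ≤ ⟪u, T u⟫ * ⟪v, T v⟫ := by
  have key : ∀ t : ℝ, 0 ≤ ⟪v, T v⟫ * (t * t) + (2 * ⟪u, T v⟫) * t + ⟪u, T u⟫ := by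
    intro t
    have h := hpsd (u + t • v)
    rw [hlin] at h
    have hvu : ⟪v, T u⟫ = ⟪u, T v⟫ := by rw [← hsa, real_inner_comm]
    have expand : ⟪u + t • v, T u + t • T v⟫
        = ⟪u, T u⟫ + t * ⟪u, T v⟫ + t * ⟪v, T u⟫ + t * t * ⟪v, T v⟫ := by
      simp only [inner_add_left, inner_add_right, real_inner_smul_left,
        real_inner_smul_right]
      ring
    rw [expand, hvu] at h
    nlinarith [h]
  have hd := discrim_le_zero key
  rw [discrim] at hd
  nlinarith [hd]

set_option maxHeartbeats 1600000 in
lemma aux_all (T : V ≃ₗ[ℝ] V)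
    (hsa : ∀ u v : V, ⟪T u, v⟫ = ⟪u, T v⟫)
    (hpd : ∀ u : V, u ≠ 0 → 0 < ⟪u, T u⟫)
    (ε0 : V) (hε0 : ε0 ≠ 0)
    (cn W m : ℝ) (hcn : 0 ≤ cn) (hWpos : 0 < W) (hm : m = ‖ε0‖ ^ 2)
    (hattain : ⟪ε0, T.symm ε0⟫ ≤ W + cn)
    (hsmall : ∀ s : V, ⟪s, ε0⟫ = 0 → ⟪s, T s⟫ ≤ cn * ‖s‖ ^ 2)
    (σ0 : V) (hσ0 : ⟪ε0, σ0⟫ = W) :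
    m * m ≤ ⟪ε0, T ε0⟫ * (W + cn)
    ∧ ‖(m / ⟪ε0, T ε0⟫) • T ε0 - ε0‖ ^ 2 ≤ cn * (W + cn)
    ∧ ⟪(m / ⟪ε0, T ε0⟫) • T ε0, T.symm ((m / ⟪ε0, T ε0⟫) • T ε0)⟫
        = m * m / ⟪ε0, T ε0⟫
    ∧ ‖T σ0 - ε0‖ ^ 2 ≤ (2 * ⟪ε0, T ε0⟫ / m + 2 * cn) *
        ((W / m) ^ 2 * ⟪ε0, T ε0⟫
          + 2 * (W / m) * Real.sqrt (⟪ε0, T ε0⟫ * (cn * ‖σ0 - (W / m) • ε0‖ ^ 2))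
          + cn * ‖σ0 - (W / m) • ε0‖ ^ 2 - W + cn) := by
  have hmpos : 0 < m := by rw [hm]; exact pow_pos (norm_pos_iff.mpr hε0) 2
  have hm0 : m ≠ 0 := hmpos.ne'
  have hpsd : ∀ u : V, 0 ≤ ⟪u, T u⟫ := by
    intro u
    rcases eq_or_ne u 0 with h | h
    · simp [h]
    · exact (hpd u h).le
  have hpd' : ∀ u : V, u ≠ 0 → 0 < ⟪u, T.symm u⟫ := by
    intro u hu
    have hw : T.symm u ≠ 0 := by
      simp only [ne_eq, LinearEquiv.map_eq_zero_iff]; exact hu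
    calc (0:ℝ) < ⟪T.symm u, T (T.symm u)⟫ := hpd _ hw
      _ = ⟪u, T.symm u⟫ := by rw [T.apply_symm_apply, real_inner_comm]
  have hpsd' : ∀ u : V, 0 ≤ ⟪u, T.symm u⟫ := by
    intro u
    rcases eq_or_ne u 0 with h | h
    · simp [h]
    · exact (hpd' u h).le
  have csT : ∀ u v : V, ⟪u, T v⟫ ^ 2 ≤ ⟪u, T u⟫ * ⟪v, T v⟫ :=
    cs_aux (fun x => T x) (by intro t u v; simp) hsa hpsd
  set a : ℝ := ⟪ε0, T ε0⟫ with ha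
  clear_value a
  have hapos : 0 < a := by rw [ha]; exact hpd ε0 hε0
  have ha0 : a ≠ 0 := hapos.ne'
  -- L1
  have L1 : m * m ≤ a * (W + cn) := by
    have h1 := csT ε0 (T.symm ε0)
    rw [T.apply_symm_apply, real_inner_self_eq_norm_sq,
      real_inner_comm ε0 (T.symm ε0), ← ha, ← hm] at h1
    nlinarith [h1, hattain, hapos]
  -- orthogonal defect
  set b : V := T ε0 - (a / m) • ε0 with hb
  clear_value b
  have hb_orth : ⟪b, ε0⟫ = 0 := by
    rw [hb, inner_sub_left, real_inner_smul_left, real_inner_self_eq_norm_sq, ← hm,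
      real_inner_comm ε0 (T ε0), ← ha]
    field_simp; ring
  have hb_sq : ‖b‖ ^ 2 ≤ cn * a := by
    have h2 : ‖b‖ ^ 2 = ⟪b, T ε0⟫ := by
      rw [← real_inner_self_eq_norm_sq]
      nth_rewrite 2 [hb]
      rw [inner_sub_right, real_inner_smul_right, hb_orth]
      ring
    have h3 : ⟪b, T ε0⟫ ^ 2 ≤ ⟪b, T b⟫ * a := by
      have h := csT b ε0
      rw [← ha] at h
      exact h
    have h4 := hsmall b hb_orth
    rw [← h2] at h3
    rcases eq_or_lt_of_le (sq_nonneg ‖b‖) with h0 | h0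
    · rw [← h0]; exact mul_nonneg hcn hapos.le
    · have h5 : ‖b‖ ^ 2 * ‖b‖ ^ 2 ≤ (cn * a) * ‖b‖ ^ 2 := by nlinarith [h3, h4, hapos]
      exact le_of_mul_le_mul_right h5 h0
  -- test point
  have hεst_sub : (m / a) • T ε0 - ε0 = (m / a) • b := by
    rw [hb, smul_sub, smul_smul]
    have h5 : m / a * (a / m) = 1 := by
      rw [div_mul_div_comm, mul_comm m a, div_self (mul_ne_zero ha0 hm0)]
    rw [h5, one_smul]
  have L2 : ‖(m / a) • T ε0 - ε0‖ ^ 2 ≤ cn * (W + cn) := by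
    rw [hεst_sub, norm_smul, mul_pow, Real.norm_eq_abs, sq_abs]
    calc (m / a) ^ 2 * ‖b‖ ^ 2 ≤ (m / a) ^ 2 * (cn * a) :=
          mul_le_mul_of_nonneg_left hb_sq (sq_nonneg _)
      _ = cn * (m * m / a) := by field_simp
      _ ≤ cn * (W + cn) := by
          refine mul_le_mul_of_nonneg_left ?_ hcn
          rw [div_le_iff₀ hapos]
          nlinarith [L1]
  have L3 : ⟪(m / a) • T ε0, T.symm ((m / a) • T ε0)⟫ = m * m / a := by
    rw [map_smul, real_inner_smul_left, real_inner_smul_right, T.symm_apply_apply,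
      real_inner_comm ε0 (T ε0), ← ha]
    field_simp
  -- σ0 decomposition
  set s0 : V := σ0 - (W / m) • ε0 with hs0
  clear_value s0
  have hs0_orth : ⟪s0, ε0⟫ = 0 := by
    rw [hs0, inner_sub_left, real_inner_smul_left, real_inner_self_eq_norm_sq, ← hm,
      real_inner_comm ε0 σ0, hσ0]
    field_simp; ring
  have hσ0dec : σ0 = (W / m) • ε0 + s0 := by rw [hs0]; abel
  have hcross : ⟪ε0, T s0⟫ ^ 2 ≤ a * (cn * ‖s0‖ ^ 2) := by
    have h := csT ε0 s0
    rw [← ha] at h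
    exact h.trans (mul_le_mul_of_nonneg_left (hsmall s0 hs0_orth) hapos.le)
  have texp : ⟪σ0, T σ0⟫ = (W / m) ^ 2 * a + 2 * (W / m) * ⟪ε0, T s0⟫ + ⟪s0, T s0⟫ := by
    have hsym : ⟪s0, T ε0⟫ = ⟪ε0, T s0⟫ :=
      (hsa s0 ε0).symm.trans (real_inner_comm ε0 (T s0))
    conv_lhs => rw [hσ0dec]
    simp only [map_add, map_smul, inner_add_left, inner_add_right,
      real_inner_smul_left, real_inner_smul_right]
    rw [hsym, ← ha]
    ring
  have tub : ⟪σ0, T σ0⟫ ≤ (W / m) ^ 2 * a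
      + 2 * (W / m) * Real.sqrt (a * (cn * ‖s0‖ ^ 2)) + cn * ‖s0‖ ^ 2 := by
    rw [texp]
    have h8 : ⟪ε0, T s0⟫ ≤ Real.sqrt (a * (cn * ‖s0‖ ^ 2)) := by
      calc ⟪ε0, T s0⟫ ≤ |⟪ε0, T s0⟫| := le_abs_self _
        _ = Real.sqrt (⟪ε0, T s0⟫ ^ 2) := (Real.sqrt_sq_eq_abs _).symm
        _ ≤ Real.sqrt (a * (cn * ‖s0‖ ^ 2)) := Real.sqrt_le_sqrt hcross
    have h7 := hsmall s0 hs0_orth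
    have hWm : (0:ℝ) ≤ 2 * (W / m) := by positivity
    nlinarith [mul_le_mul_of_nonneg_left h8 hWm, h7]
  have hQd : ⟪T σ0 - ε0, T.symm (T σ0 - ε0)⟫ ≤ ⟪σ0, T σ0⟫ - W + cn := by
    rw [map_sub, T.symm_apply_apply, inner_sub_left, inner_sub_right, inner_sub_right]
    have e1 : ⟪T σ0, σ0⟫ = ⟪σ0, T σ0⟫ := real_inner_comm σ0 (T σ0)
    have e2 : ⟪T σ0, T.symm ε0⟫ = W := by
      have h := hsa σ0 (T.symm ε0)
      rw [T.apply_symm_apply] at h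
      rw [h, real_inner_comm ε0 σ0, hσ0]
    rw [e1, e2, hσ0]
    linarith [hattain]
  -- uniform bound on the quadratic form of T
  have hK : ∀ v : V, ⟪v, T v⟫ ≤ (2 * a / m + 2 * cn) * ‖v‖ ^ 2 := by
    intro v
    set x : ℝ := ⟪ε0, v⟫ with hx
    clear_value x
    set sv : V := v - (x / m) • ε0 with hsv
    clear_value sv
    have hsv_orth : ⟪sv, ε0⟫ = 0 := by
      rw [hsv, inner_sub_left, real_inner_smul_left, real_inner_self_eq_norm_sq, ← hm,
        real_inner_comm ε0 v, ← hx]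
      field_simp; ring
    have hvdec : v = (x / m) • ε0 + sv := by rw [hsv]; abel
    have hpyth : ‖v‖ ^ 2 = (x / m) ^ 2 * m + ‖sv‖ ^ 2 := by
      conv_lhs => rw [hvdec]
      rw [norm_add_sq_real, real_inner_smul_left, real_inner_comm sv ε0, hsv_orth,
        norm_smul, mul_pow, Real.norm_eq_abs, sq_abs, ← hm]
      ring
    have hexp : ⟪v, T v⟫ = (x / m) ^ 2 * a + 2 * (x / m) * ⟪ε0, T sv⟫ + ⟪sv, T sv⟫ := by
      have hsym : ⟪sv, T ε0⟫ = ⟪ε0, T sv⟫ :=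
        (hsa sv ε0).symm.trans (real_inner_comm ε0 (T sv))
      conv_lhs => rw [hvdec]
      simp only [map_add, map_smul, inner_add_left, inner_add_right,
        real_inner_smul_left, real_inner_smul_right]
      rw [hsym, ← ha]
      ring
    have hcr : ⟪ε0, T sv⟫ ^ 2 ≤ a * (cn * ‖sv‖ ^ 2) := by
      have h := csT ε0 sv
      rw [← ha] at h
      exact h.trans (mul_le_mul_of_nonneg_left (hsmall sv hsv_orth) hapos.le)
    have h9 : 2 * (x / m) * ⟪ε0, T sv⟫ ≤ (x / m) ^ 2 * a + cn * ‖sv‖ ^ 2 := by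
      nlinarith [sq_nonneg ((x / m) * a - ⟪ε0, T sv⟫), hcr, hapos]
    have h10 := hsmall sv hsv_orth
    have hx2 : (x / m) ^ 2 * m ≤ ‖v‖ ^ 2 := by nlinarith [hpyth, sq_nonneg ‖sv‖]
    have h11 : (x / m) ^ 2 * a ≤ a / m * ‖v‖ ^ 2 := by
      calc (x / m) ^ 2 * a = a / m * ((x / m) ^ 2 * m) := by field_simp
        _ ≤ a / m * ‖v‖ ^ 2 :=
          mul_le_mul_of_nonneg_left hx2 (div_pos hapos hmpos).le
    have hsv2 : ‖sv‖ ^ 2 ≤ ‖v‖ ^ 2 := by nlinarith [hpyth, sq_nonneg (x / m), hmpos]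
    have h12 : cn * ‖sv‖ ^ 2 ≤ cn * ‖v‖ ^ 2 := mul_le_mul_of_nonneg_left hsv2 hcn
    rw [hexp, show 2 * a / m + 2 * cn = 2 * (a / m) + 2 * cn from by ring]
    linarith [h9, h10, h11, h12]
  -- L4
  have hKnn : (0:ℝ) ≤ 2 * a / m + 2 * cn := by positivity
  have h13 : (‖T σ0 - ε0‖ ^ 2) ^ 2
      ≤ ⟪T σ0 - ε0, T (T σ0 - ε0)⟫ * ⟪T σ0 - ε0, T.symm (T σ0 - ε0)⟫ := by
    have h := csT (T σ0 - ε0) (T.symm (T σ0 - ε0))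
    rw [T.apply_symm_apply, real_inner_self_eq_norm_sq,
      real_inner_comm (T σ0 - ε0) (T.symm (T σ0 - ε0))] at h
    exact h
  have hδ : ⟪T σ0 - ε0, T.symm (T σ0 - ε0)⟫ ≤ (W / m) ^ 2 * a
      + 2 * (W / m) * Real.sqrt (a * (cn * ‖s0‖ ^ 2)) + cn * ‖s0‖ ^ 2 - W + cn := by
    refine hQd.trans ?_
    linarith [tub]
  have hδ0 : (0:ℝ) ≤ (W / m) ^ 2 * a
      + 2 * (W / m) * Real.sqrt (a * (cn * ‖s0‖ ^ 2)) + cn * ‖s0‖ ^ 2 - W + cn :=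
    le_trans (hpsd' (T σ0 - ε0)) hδ
  have L4 : ‖T σ0 - ε0‖ ^ 2 ≤ (2 * a / m + 2 * cn) *
      ((W / m) ^ 2 * a + 2 * (W / m) * Real.sqrt (a * (cn * ‖s0‖ ^ 2))
        + cn * ‖s0‖ ^ 2 - W + cn) := by
    rcases eq_or_lt_of_le (sq_nonneg ‖T σ0 - ε0‖) with h0 | h0
    · rw [← h0]; exact mul_nonneg hKnn hδ0
    · have hchain : ‖T σ0 - ε0‖ ^ 2 * ‖T σ0 - ε0‖ ^ 2
          ≤ ((2 * a / m + 2 * cn) *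
            ((W / m) ^ 2 * a + 2 * (W / m) * Real.sqrt (a * (cn * ‖s0‖ ^ 2))
              + cn * ‖s0‖ ^ 2 - W + cn)) * ‖T σ0 - ε0‖ ^ 2 := by
        calc ‖T σ0 - ε0‖ ^ 2 * ‖T σ0 - ε0‖ ^ 2 = (‖T σ0 - ε0‖ ^ 2) ^ 2 := by ring
          _ ≤ ⟪T σ0 - ε0, T (T σ0 - ε0)⟫ * ⟪T σ0 - ε0, T.symm (T σ0 - ε0)⟫ := h13
          _ ≤ ((2 * a / m + 2 * cn) * ‖T σ0 - ε0‖ ^ 2) *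
              ((W / m) ^ 2 * a + 2 * (W / m) * Real.sqrt (a * (cn * ‖s0‖ ^ 2))
                + cn * ‖s0‖ ^ 2 - W + cn) :=
            mul_le_mul (hK _) hδ (hpsd' _) (mul_nonneg hKnn (sq_nonneg _))
          _ = _ := by ring
      exact le_of_mul_le_mul_right hchain h0
  exact ⟨L1, L2, L3, L4⟩

end Aux

/-- Abstract core of Theorem 4 of Milton & Camar-Eddine: if `Sₙ` are self-adjoint
positive definite (compliance) operators nearly attaining the elastic energy bound `W̃`
at `ε⁰` and with small compliance on the orthogonal complement of `ε⁰`, then for every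
`σ⁰` with `⟪ε⁰, σ⁰⟫ = W̃ ε⁰` one has `Sₙ σ⁰ → ε⁰`. -/
theorem weak_G_closure_unimode
    {V : Type*} [NormedAddCommGroup V] [InnerProductSpace ℝ V] [FiniteDimensional ℝ V]
    (ε0 : V) (hε0 : ε0 ≠ 0)
    (Wt : V → ℝ) (hWtcont : Continuous Wt) (hWtpos : 0 < Wt ε0)
    (c : ℕ → ℝ) (hc_nonneg : ∀ n, 0 ≤ c n)
    (hc_lim : Filter.Tendsto c Filter.atTop (nhds 0))
    (S : ℕ → (V ≃ₗ[ℝ] V))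
    (hS_sa : ∀ n, ∀ u v : V, ⟪(S n) u, v⟫ = ⟪u, (S n) v⟫)
    (hS_pd : ∀ n, ∀ u : V, u ≠ 0 → 0 < ⟪u, (S n) u⟫)
    (hbound : ∀ n, ∀ ε : V, Wt ε ≤ ⟪ε, (S n).symm ε⟫)
    (hattain : ∀ n, ⟪ε0, (S n).symm ε0⟫ ≤ Wt ε0 + c n)
    (hsmall : ∀ n, ∀ s : V, ⟪s, ε0⟫ = 0 → ⟪s, (S n) s⟫ ≤ c n * ‖s‖ ^ 2) :
    ∀ σ0 : V, ⟪ε0, σ0⟫ = Wt ε0 →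
      Filter.Tendsto (fun n => (S n) σ0) Filter.atTop (nhds ε0) := by
  intro σ0 hσ0
  have haux := fun n => aux_all (S n) (hS_sa n) (hS_pd n) ε0 hε0
    (c n) (Wt ε0) (‖ε0‖ ^ 2) (hc_nonneg n) hWtpos rfl (hattain n) (hsmall n) σ0 hσ0
  have hA_pos : ∀ n, 0 < ⟪ε0, S n ε0⟫ := fun n => hS_pd n ε0 hε0
  have hWc_pos : ∀ n, 0 < Wt ε0 + c n := fun n => by linarith [hc_nonneg n]
  have hW0 : Wt ε0 ≠ 0 := hWtpos.ne'
  -- limit of a n = ⟪ε0, S n ε0⟫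
  have ha_lb' : ∀ n, ‖ε0‖ ^ 2 * ‖ε0‖ ^ 2 / (Wt ε0 + c n) ≤ ⟪ε0, S n ε0⟫ := by
    intro n
    rw [div_le_iff₀ (hWc_pos n)]
    exact (haux n).1
  have hcW_lim : Tendsto (fun n => c n * (Wt ε0 + c n)) atTop (nhds 0) := by
    have h := hc_lim.mul ((tendsto_const_nhds (x := Wt ε0)).add hc_lim)
    simpa using h
  have hεst_lim : Tendsto (fun n => (‖ε0‖ ^ 2 / ⟪ε0, S n ε0⟫) • S n ε0) atTop
      (nhds ε0) := by
    rw [tendsto_iff_norm_sub_tendsto_zero]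
    have hub : ∀ n, ‖(‖ε0‖ ^ 2 / ⟪ε0, S n ε0⟫) • S n ε0 - ε0‖
        ≤ Real.sqrt (c n * (Wt ε0 + c n)) := by
      intro n
      rw [show ‖(‖ε0‖ ^ 2 / ⟪ε0, S n ε0⟫) • S n ε0 - ε0‖
          = Real.sqrt (‖(‖ε0‖ ^ 2 / ⟪ε0, S n ε0⟫) • S n ε0 - ε0‖ ^ 2) from
        (Real.sqrt_sq (norm_nonneg _)).symm]
      exact Real.sqrt_le_sqrt (haux n).2.1
    have hsq : Tendsto (fun n => Real.sqrt (c n * (Wt ε0 + c n))) atTop (nhds 0) := by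
      have := hcW_lim.sqrt
      simpa using this
    exact tendsto_of_tendsto_of_tendsto_of_le_of_le tendsto_const_nhds hsq
      (fun n => norm_nonneg _) hub
  have hWst : Tendsto (fun n => Wt ((‖ε0‖ ^ 2 / ⟪ε0, S n ε0⟫) • S n ε0)) atTop
      (nhds (Wt ε0)) := (hWtcont.tendsto ε0).comp hεst_lim
  have hWst_pos : ∀ᶠ n in atTop, 0 < Wt ((‖ε0‖ ^ 2 / ⟪ε0, S n ε0⟫) • S n ε0) :=
    hWst.eventually_const_lt hWtpos
  have ha_ub_ev : ∀ᶠ n in atTop, ⟪ε0, S n ε0⟫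
      ≤ ‖ε0‖ ^ 2 * ‖ε0‖ ^ 2 / Wt ((‖ε0‖ ^ 2 / ⟪ε0, S n ε0⟫) • S n ε0) := by
    filter_upwards [hWst_pos] with n hn
    have h1 := hbound n ((‖ε0‖ ^ 2 / ⟪ε0, S n ε0⟫) • S n ε0)
    rw [(haux n).2.2.1] at h1
    rw [le_div_iff₀ hn]
    calc ⟪ε0, S n ε0⟫ * Wt ((‖ε0‖ ^ 2 / ⟪ε0, S n ε0⟫) • S n ε0)
        ≤ ⟪ε0, S n ε0⟫ * (‖ε0‖ ^ 2 * ‖ε0‖ ^ 2 / ⟪ε0, S n ε0⟫) :=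
          mul_le_mul_of_nonneg_left h1 (hA_pos n).le
      _ = ‖ε0‖ ^ 2 * ‖ε0‖ ^ 2 := by field_simp [(hA_pos n).ne']
  have ha_lim : Tendsto (fun n => ⟪ε0, S n ε0⟫) atTop
      (nhds (‖ε0‖ ^ 2 * ‖ε0‖ ^ 2 / Wt ε0)) := by
    have hlow : Tendsto (fun n => ‖ε0‖ ^ 2 * ‖ε0‖ ^ 2 / (Wt ε0 + c n)) atTop
        (nhds (‖ε0‖ ^ 2 * ‖ε0‖ ^ 2 / Wt ε0)) := by
      have h := (tendsto_const_nhds (x := ‖ε0‖ ^ 2 * ‖ε0‖ ^ 2)).div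
        ((tendsto_const_nhds (x := Wt ε0)).add hc_lim) (by rw [add_zero]; exact hW0)
      rw [add_zero] at h
      exact h
    have hhigh : Tendsto
        (fun n => ‖ε0‖ ^ 2 * ‖ε0‖ ^ 2 / Wt ((‖ε0‖ ^ 2 / ⟪ε0, S n ε0⟫) • S n ε0)) atTop
        (nhds (‖ε0‖ ^ 2 * ‖ε0‖ ^ 2 / Wt ε0)) :=
      (tendsto_const_nhds (x := ‖ε0‖ ^ 2 * ‖ε0‖ ^ 2)).div hWst hW0
    exact tendsto_of_tendsto_of_tendsto_of_le_of_le' hlow hhigh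
      (Eventually.of_forall ha_lb') ha_ub_ev
  -- final squeeze
  have hRlim : Tendsto (fun n => (2 * ⟪ε0, S n ε0⟫ / ‖ε0‖ ^ 2 + 2 * c n) *
      ((Wt ε0 / ‖ε0‖ ^ 2) ^ 2 * ⟪ε0, S n ε0⟫
        + 2 * (Wt ε0 / ‖ε0‖ ^ 2) * Real.sqrt (⟪ε0, S n ε0⟫ *
            (c n * ‖σ0 - (Wt ε0 / ‖ε0‖ ^ 2) • ε0‖ ^ 2))
        + c n * ‖σ0 - (Wt ε0 / ‖ε0‖ ^ 2) • ε0‖ ^ 2 - Wt ε0 + c n)) atTop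
      (nhds 0) := by
    have hm : (0:ℝ) < ‖ε0‖ ^ 2 := pow_pos (norm_pos_iff.mpr hε0) 2
    have hKlim : Tendsto (fun n => 2 * ⟪ε0, S n ε0⟫ / ‖ε0‖ ^ 2 + 2 * c n) atTop
        (nhds (2 * (‖ε0‖ ^ 2 * ‖ε0‖ ^ 2 / Wt ε0) / ‖ε0‖ ^ 2 + 2 * 0)) :=
      ((ha_lim.const_mul 2).div_const _).add (hc_lim.const_mul 2)
    have hsqrt : Tendsto (fun n => Real.sqrt (⟪ε0, S n ε0⟫ *
        (c n * ‖σ0 - (Wt ε0 / ‖ε0‖ ^ 2) • ε0‖ ^ 2))) atTop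
        (nhds (Real.sqrt ((‖ε0‖ ^ 2 * ‖ε0‖ ^ 2 / Wt ε0) *
          (0 * ‖σ0 - (Wt ε0 / ‖ε0‖ ^ 2) • ε0‖ ^ 2)))) :=
      (ha_lim.mul (hc_lim.mul_const _)).sqrt
    have hBlim : Tendsto (fun n => (Wt ε0 / ‖ε0‖ ^ 2) ^ 2 * ⟪ε0, S n ε0⟫
        + 2 * (Wt ε0 / ‖ε0‖ ^ 2) * Real.sqrt (⟪ε0, S n ε0⟫ *
            (c n * ‖σ0 - (Wt ε0 / ‖ε0‖ ^ 2) • ε0‖ ^ 2))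
        + c n * ‖σ0 - (Wt ε0 / ‖ε0‖ ^ 2) • ε0‖ ^ 2 - Wt ε0 + c n) atTop
        (nhds ((Wt ε0 / ‖ε0‖ ^ 2) ^ 2 * (‖ε0‖ ^ 2 * ‖ε0‖ ^ 2 / Wt ε0)
          + 2 * (Wt ε0 / ‖ε0‖ ^ 2) * Real.sqrt ((‖ε0‖ ^ 2 * ‖ε0‖ ^ 2 / Wt ε0) *
              (0 * ‖σ0 - (Wt ε0 / ‖ε0‖ ^ 2) • ε0‖ ^ 2))
          + 0 * ‖σ0 - (Wt ε0 / ‖ε0‖ ^ 2) • ε0‖ ^ 2 - Wt ε0 + 0)) :=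
      ((((ha_lim.const_mul _).add
        ((hsqrt.const_mul _))).add (hc_lim.mul_const _)).sub_const _).add hc_lim
    have h := hKlim.mul hBlim
    have hval : (2 * (‖ε0‖ ^ 2 * ‖ε0‖ ^ 2 / Wt ε0) / ‖ε0‖ ^ 2 + 2 * 0) *
        ((Wt ε0 / ‖ε0‖ ^ 2) ^ 2 * (‖ε0‖ ^ 2 * ‖ε0‖ ^ 2 / Wt ε0)
          + 2 * (Wt ε0 / ‖ε0‖ ^ 2) * Real.sqrt ((‖ε0‖ ^ 2 * ‖ε0‖ ^ 2 / Wt ε0) *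
              (0 * ‖σ0 - (Wt ε0 / ‖ε0‖ ^ 2) • ε0‖ ^ 2))
          + 0 * ‖σ0 - (Wt ε0 / ‖ε0‖ ^ 2) • ε0‖ ^ 2 - Wt ε0 + 0) = 0 := by
      have h1 : (Wt ε0 / ‖ε0‖ ^ 2) ^ 2 * (‖ε0‖ ^ 2 * ‖ε0‖ ^ 2 / Wt ε0) = Wt ε0 := by
        field_simp
      simp only [zero_mul, mul_zero, Real.sqrt_zero, h1]
      ring
    rw [hval] at h
    exact h
  have hsq_lim : Tendsto (fun n => ‖S n σ0 - ε0‖ ^ 2) atTop (nhds 0) :=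
    tendsto_of_tendsto_of_tendsto_of_le_of_le tendsto_const_nhds hRlim
      (fun n => sq_nonneg _) (fun n => (haux n).2.2.2)
  rw [tendsto_iff_norm_sub_tendsto_zero]
  have h := hsq_lim.sqrt
  rw [Real.sqrt_zero] at h
  convert h using 2 with n
  rw [Real.sqrt_sq (norm_nonneg _)]
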